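/- Let $\mathfrak{g}$ be a finite-dimensional complex Lie algebra with a Hermitian real inner product $\langle\cdot,\cdot\rangle$, center $\mathfrak{z}$, $\mathfrak{v} = \mathfrak{z}^\perp$, and $J$ defined as usual. Fix $z \in \mathfrak{z}$ with $\|z\| = 1$ and suppose $J_z : \mathfrak{v} \to \mathfrak{v}$ is an isometry. Then for every $w \in \mathfrak{z}$ of the form $w = \alpha z$ with $\alpha \in \mathbb{C}$ and $|\alpha| = 1$ (equivalently $\|w\| = 1$), the map $J_w : \mathfrak{v} \to \mathfrak{v}$ is also an isometry. -/

import Mathlib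

open scoped RealInnerProductSpace

attribute [-instance] LieRing.toAddCommGroup

/-- Let `G` be a finite-dimensional complex Lie algebra with a Hermitian real
inner product, center `𝔷`, `𝔳 = 𝔷ᗮ` and `J` as usual.  If `z ∈ 𝔷` is a unit
vector with `J z` an isometry of `𝔳`, then for every `w = α • z` with
`α : ℂ`, `|α| = 1` (equivalently `‖w‖ = 1`), the map `J w` is also an isometry
of `𝔳`. -/
theorem Jw_isometry_of_unit_multiple
    {G : Type*} [LieRing G]
    [NormedAddCommGroup G] [InnerProductSpace ℝ G]
    [Module ℂ G] [IsScalarTower ℝ ℂ G] [FiniteDimensional ℂ G]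
    (hbil : ∀ (a : ℂ) (x y : G), ⁅a • x, y⁆ = a • ⁅x, y⁆)
    (hherm : ∀ x y : G, ⟪(Complex.I : ℂ) • x, (Complex.I : ℂ) • y⟫ = ⟪x, y⟫)
    (𝔷 : Submodule ℂ G) (h𝔷 : ∀ x : G, x ∈ 𝔷 ↔ ∀ y : G, ⁅x, y⁆ = 0)
    (J : G → G → G)
    (hJmem : ∀ z ∈ 𝔷, ∀ u ∈ (𝔷.restrictScalars ℝ)ᗮ, J z u ∈ (𝔷.restrictScalars ℝ)ᗮ)
    (hJdef : ∀ z ∈ 𝔷, ∀ u ∈ (𝔷.restrictScalars ℝ)ᗮ, ∀ v ∈ (𝔷.restrictScalars ℝ)ᗮ,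
      ⟪J z u, v⟫ = ⟪z, ⁅u, v⁆⟫)
    (z : G) (hz : z ∈ 𝔷) (hz1 : ‖z‖ = 1)
    (hziso : ∀ u ∈ (𝔷.restrictScalars ℝ)ᗮ, ∀ v ∈ (𝔷.restrictScalars ℝ)ᗮ,
      ⟪J z u, J z v⟫ = ⟪u, v⟫) :
    ∀ α : ℂ, ‖α‖ = 1 →
      ∀ u ∈ (𝔷.restrictScalars ℝ)ᗮ, ∀ v ∈ (𝔷.restrictScalars ℝ)ᗮ,
        ⟪J (α • z) u, J (α • z) v⟫ = ⟪u, v⟫ := by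
  intro α hα u hu v hv
  set V := (𝔷.restrictScalars ℝ)ᗮ with hV
  set a := α.re with ha
  set b := α.im with hb
  have hII : ∀ x : G, (Complex.I : ℂ) • ((Complex.I : ℂ) • x) = -x := by
    intro x
    rw [smul_smul, Complex.I_mul_I, neg_one_smul]
  have hskew : ∀ x y : G, ⟪(Complex.I : ℂ) • x, y⟫ = -⟪x, (Complex.I : ℂ) • y⟫ := by
    intro x y
    have h := hherm ((Complex.I : ℂ) • x) y
    rw [hII, inner_neg_left] at h
    linarith
  have hIV : ∀ x ∈ V, (Complex.I : ℂ) • x ∈ V := by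
    intro x hx y hy
    have hIy : (Complex.I : ℂ) • y ∈ 𝔷.restrictScalars ℝ := by
      simpa using 𝔷.smul_mem (Complex.I : ℂ) (by simpa using hy)
    have h0 : ⟪(Complex.I : ℂ) • y, x⟫ = 0 := hx _ hIy
    rw [hskew] at h0
    linarith
  -- decomposition of α • z
  have hcoe : ∀ (r : ℝ) (x : G), (r : ℂ) • x = r • x := by
    intro r x
    rw [← smul_one_smul ℂ r x, Complex.real_smul, mul_one]
  have hdec : α • z = a • z + b • ((Complex.I : ℂ) • z) := by
    have h : α = (a : ℂ) + (b : ℂ) * Complex.I := (Complex.re_add_im α).symm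
    rw [h, add_smul, mul_smul, hcoe, hcoe]
  have hαz : α • z ∈ 𝔷 := 𝔷.smul_mem α hz
  -- key formula
  have hform : ∀ x ∈ V, ∀ y ∈ V,
      ⟪J (α • z) x, y⟫ = a * ⟪J z x, y⟫ - b * ⟪J z ((Complex.I : ℂ) • x), y⟫ := by
    intro x hx y hy
    rw [hJdef _ hαz x hx y hy, hdec, inner_add_left, real_inner_smul_left,
      real_inner_smul_left, hskew, ← hbil, ← hJdef z hz _ (hIV x hx) y hy,
      ← hJdef z hz x hx y hy]
    ring
  have hJu := hJmem _ hαz u hu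
  have hJv := hJmem _ hαz v hv
  have hJzu := hJmem _ hz u hu
  have hJzv := hJmem _ hz v hv
  have hJzIu := hJmem _ hz _ (hIV u hu)
  have hJzIv := hJmem _ hz _ (hIV v hv)
  have e1 : ⟪J (α • z) u, J (α • z) v⟫
      = a * ⟪J z u, J (α • z) v⟫ - b * ⟪J z ((Complex.I : ℂ) • u), J (α • z) v⟫ :=
    hform u hu _ hJv
  have e2 : ⟪J (α • z) v, J z u⟫
      = a * ⟪J z v, J z u⟫ - b * ⟪J z ((Complex.I : ℂ) • v), J z u⟫ :=
    hform v hv _ hJzu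
  have e3 : ⟪J (α • z) v, J z ((Complex.I : ℂ) • u)⟫
      = a * ⟪J z v, J z ((Complex.I : ℂ) • u)⟫
        - b * ⟪J z ((Complex.I : ℂ) • v), J z ((Complex.I : ℂ) • u)⟫ :=
    hform v hv _ hJzIu
  have c1 : ⟪J z u, J (α • z) v⟫ = ⟪J (α • z) v, J z u⟫ := real_inner_comm _ _
  have c2 : ⟪J z ((Complex.I : ℂ) • u), J (α • z) v⟫
      = ⟪J (α • z) v, J z ((Complex.I : ℂ) • u)⟫ := real_inner_comm _ _
  have i1 := hziso v hv u hu
  have i2 := hziso _ (hIV v hv) u hu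
  have i3 := hziso v hv _ (hIV u hu)
  have i4 := hziso _ (hIV v hv) _ (hIV u hu)
  have hcross : ⟪(Complex.I : ℂ) • v, u⟫ = -⟪v, (Complex.I : ℂ) • u⟫ := hskew v u
  have hsame : ⟪(Complex.I : ℂ) • v, (Complex.I : ℂ) • u⟫ = ⟪v, u⟫ := hherm v u
  have hcomm : ⟪v, u⟫ = ⟪u, v⟫ := real_inner_comm _ _
  have habs : a * a + b * b = 1 := by
    have h := Complex.sq_norm α
    rw [hα, Complex.normSq_apply] at h
    simpa using h.symm
  rw [e1, c1, c2, e2, e3, i1, i2, i3, i4, hcross, hsame, hcomm]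
  linear_combination ⟪u, v⟫ * habs
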